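/- Let R be a group of squarefree order that is either abelian of composite order, or isomorphic to D_{2r} × C_q with r ∈ {3,5} and q a prime not dividing 2r. Then R is not DRR-detecting. -/

import Mathlib

open Multiplicative DihedralGroup

private def DRRKey (P : Type*) [Group P] : Prop :=
  ∃ S : Set P,
    (∀ φ : MulAut P, φ '' S = S → φ = 1) ∧
    ∃ f : Equiv.Perm P,
      (∀ x y : P, x * y⁻¹ ∈ S ↔ f x * (f y)⁻¹ ∈ S) ∧
      ¬ ∃ r : P, ∀ v, f v = v * r

private lemma DRRKey.transport {R P : Type*} [Group R] [Group P] (e : R ≃* P)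
    (h : DRRKey P) : DRRKey R := by
  obtain ⟨S, hS, f, hf, hft⟩ := h
  refine ⟨⇑e ⁻¹' S, fun φ hφ => ?_, ⟨e.toEquiv.trans (f.trans e.toEquiv.symm),
    fun x y => ?_, ?_⟩⟩
  · have hψ : ⇑(e.symm.trans ((φ : R ≃* R).trans e)) '' S = S := by
      ext z
      simp only [Set.mem_image, MulEquiv.trans_apply]
      constructor
      · rintro ⟨u, hu, rfl⟩
        have : φ (e.symm u) ∈ ⇑φ '' (⇑e ⁻¹' S) :=
          Set.mem_image_of_mem _ (by simpa using hu)
        rw [hφ] at this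
        simpa using this
      · intro hz
        refine ⟨e (φ.symm (e.symm z)), ?_, by simp⟩
        have hz' : e.symm z ∈ ⇑φ '' (⇑e ⁻¹' S) := by
          rw [hφ]; simpa using hz
        obtain ⟨u, hu, hu2⟩ := hz'
        have : φ.symm (e.symm z) = u := by rw [← hu2]; simp
        rw [this]
        simpa using hu
    have h1 := hS (e.symm.trans ((φ : R ≃* R).trans e)) hψ
    ext y
    have h2 := DFunLike.congr_fun h1 (e y)
    simp only [MulEquiv.trans_apply, MulEquiv.symm_apply_apply] at h2
    have h3 : e (φ y) = e y := by simpa using h2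
    simpa [MulAut.one_apply] using e.injective h3
  · have h1 := hf (e x) (e y)
    simp only [Set.mem_preimage, Equiv.trans_apply, MulEquiv.coe_toEquiv,
      MulEquiv.coe_toEquiv_symm, map_mul, map_inv, MulEquiv.apply_symm_apply]
    simpa [map_mul, map_inv] using h1
  · rintro ⟨t, ht⟩
    refine hft ⟨e t, fun v => ?_⟩
    have h1 := congrArg e (ht (e.symm v))
    simpa [map_mul] using h1


private lemma drr_ab (M q : ℕ) (hM : 1 < M) (hq : q.Prime) (hqM : ¬ q ∣ M) :
    DRRKey (Multiplicative (ZMod M × ZMod q)) := by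
  haveI : Fact (1 < M) := ⟨hM⟩
  haveI : Fact (1 < q) := ⟨hq.one_lt⟩
  haveI : NeZero M := ⟨by omega⟩
  haveI : NeZero q := ⟨hq.pos.ne'⟩
  have hMq : M ≠ q := fun h => hqM (h ▸ dvd_rfl)
  classical
  set c : ZMod M → ZMod q := fun g => if g = 0 then 0 else 1 with hc
  refine ⟨{z | (toAdd z).1 = 1 ∨ toAdd z = (0, 1)}, fun φ hφ => ?_,
    ⟨⟨fun z => ofAdd ((toAdd z).1, (toAdd z).2 + c (toAdd z).1),
      fun z => ofAdd ((toAdd z).1, (toAdd z).2 - c (toAdd z).1),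
      fun z => by simp, fun z => by simp⟩, fun x y => ?_, ?_⟩⟩
  · -- stabilizer
    have hmem : ∀ z, z ∈ {z : Multiplicative (ZMod M × ZMod q) |
        (toAdd z).1 = 1 ∨ toAdd z = (0, 1)} → φ z ∈ {z : Multiplicative (ZMod M × ZMod q) |
        (toAdd z).1 = 1 ∨ toAdd z = (0, 1)} := fun z hz => hφ ▸ Set.mem_image_of_mem _ hz
    have horder : ∀ z, orderOf (φ z) = orderOf z := fun z => by
      simpa using orderOf_injective φ.toMonoidHom φ.injective z
    have hordZ : ∀ z : Multiplicative (ZMod M × ZMod q),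
        orderOf z = Nat.lcm (addOrderOf (toAdd z).1) (addOrderOf (toAdd z).2) := fun z => by
      conv_lhs => rw [← ofAdd_toAdd z]
      rw [orderOf_ofAdd_eq_addOrderOf, Prod.addOrderOf]
    set u : Multiplicative (ZMod M × ZMod q) := ofAdd (0, 1) with hu
    set v : Multiplicative (ZMod M × ZMod q) := ofAdd (1, 0) with hv
    have hordu : orderOf u = q := by
      rw [hordZ]; simp [hu, ZMod.addOrderOf_one]
    have hordv : orderOf v = M := by
      rw [hordZ]; simp [hv, ZMod.addOrderOf_one]
    -- φ fixes u
    have hφu : φ u = u := by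
      rcases hmem u (Or.inr rfl) with h | h
      · exfalso
        have h1 : M ∣ orderOf (φ u) := by
          rw [hordZ (φ u), h, ZMod.addOrderOf_one]
          exact Nat.dvd_lcm_left _ _
        rw [horder, hordu] at h1
        rcases (Nat.Prime.eq_one_or_self_of_dvd hq M h1) with h2 | h2
        · omega
        · exact hMq h2
      · rw [← ofAdd_toAdd (φ u), h]
    -- φ fixes v
    have hφv : φ v = v := by
      rcases hmem v (Or.inl rfl) with h | h
      · have hb : addOrderOf (toAdd (φ v)).2 = 1 := by
          have h1 : addOrderOf (toAdd (φ v)).2 ∣ M := by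
            conv_rhs => rw [← hordv, ← horder v]
            rw [hordZ (φ v)]
            exact Nat.dvd_lcm_right _ _
          have h2 : addOrderOf (toAdd (φ v)).2 ∣ q := by
            apply addOrderOf_dvd_of_nsmul_eq_zero
            rw [nsmul_eq_mul, ZMod.natCast_self, zero_mul]
          rcases (Nat.dvd_prime hq).mp h2 with h3 | h3
          · exact h3
          · exact absurd (h3 ▸ h1) hqM
        have hb0 : (toAdd (φ v)).2 = 0 := by
          rwa [AddMonoid.addOrderOf_eq_one_iff] at hb
        rw [← ofAdd_toAdd (φ v)]
        rw [hv]
        congr 1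
        exact Prod.ext h hb0
      · exfalso
        have h1 : orderOf (φ v) = q := by rw [hordZ (φ v), h]; simp [ZMod.addOrderOf_one]
        rw [horder, hordv] at h1
        exact hMq h1
    -- conclude
    have hgen : ∀ z : Multiplicative (ZMod M × ZMod q),
        z = v ^ (toAdd z).1.val * u ^ (toAdd z).2.val := by
      intro z
      rw [hu, hv, ← ofAdd_nsmul, ← ofAdd_nsmul, ← ofAdd_add]
      conv_lhs => rw [← ofAdd_toAdd z]
      congr 1
      rw [Prod.smul_mk, Prod.smul_mk, Prod.mk_add_mk]
      simp [Nat.smul_one_eq_cast, ZMod.natCast_val, ZMod.cast_id]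
    apply MulEquiv.ext
    intro z
    rw [MulAut.one_apply, hgen z, map_mul, map_pow, map_pow, hφu, hφv]
  · -- edge condition
    have hkey : ∀ (a : ZMod M) (b d : ZMod q), (a = 0 → d = 0) →
        ((a = 1 ∨ (a = 0 ∧ b = 1)) ↔ (a = 1 ∨ (a = 0 ∧ b + d = 1))) := by
      intro a b d hd
      by_cases h : a = 0
      · rw [hd h, add_zero]
      · simp [h]
    simp only [Set.mem_setOf_eq, Equiv.coe_fn_mk, toAdd_mul, toAdd_inv, toAdd_ofAdd,
      Prod.ext_iff, Prod.fst_add, Prod.fst_neg, Prod.snd_add, Prod.snd_neg]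
    have h2 : (toAdd x).2 + c (toAdd x).1 + -((toAdd y).2 + c (toAdd y).1)
        = ((toAdd x).2 + -(toAdd y).2) + (c (toAdd x).1 - c (toAdd y).1) := by ring
    rw [h2]
    apply hkey
    intro h0
    have h3 : (toAdd x).1 = (toAdd y).1 := by
      have := sub_eq_zero.mp (show (toAdd x).1 - (toAdd y).1 = 0 by rw [← h0]; ring)
      exact this
    rw [h3, sub_self]
  · -- not a translation
    rintro ⟨t, ht⟩
    have h0 := ht (ofAdd (0, 0))
    have h1 := ht (ofAdd (1, 0))
    simp only [Equiv.coe_fn_mk, toAdd_ofAdd] at h0 h1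
    have hc0 : c 0 = 0 := by simp [hc]
    have hc1 : c 1 = 1 := by
      have : (1 : ZMod M) ≠ 0 := one_ne_zero
      simp [hc, this]
    have ht1 : t = 1 := by simpa [hc0] using h0.symm
    rw [ht1, mul_one, hc1] at h1
    have h2 : ((1 : ZMod M), (0:ZMod q) + 1) = ((1 : ZMod M), (0:ZMod q)) := by
      simpa using congrArg toAdd h1
    have h3 := (Prod.ext_iff.mp h2).2
    simp at h3

private def cfun {n q : ℕ} : DihedralGroup n → Multiplicative (ZMod q)
  | .r _ => 1
  | .sr _ => ofAdd 1

@[simp] private lemma cfun_r {n q : ℕ} (i : ZMod n) :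
    (cfun (DihedralGroup.r i) : Multiplicative (ZMod q)) = 1 := rfl

@[simp] private lemma cfun_sr {n q : ℕ} (i : ZMod n) :
    (cfun (DihedralGroup.sr i) : Multiplicative (ZMod q)) = ofAdd 1 := rfl

@[simp] private lemma dih_inv_r {n : ℕ} (i : ZMod n) :
    (DihedralGroup.r i)⁻¹ = DihedralGroup.r (-i) := rfl

@[simp] private lemma dih_inv_sr {n : ℕ} (i : ZMod n) :
    (DihedralGroup.sr i)⁻¹ = DihedralGroup.sr i := rfl

private lemma drr_dih (n q : ℕ) (hn2 : 2 < n) (hodd : Odd n) (hq : q.Prime)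
    (hq2 : q ≠ 2) (hqn : ¬ q ∣ n) :
    DRRKey (DihedralGroup n × Multiplicative (ZMod q)) := by
  haveI : NeZero n := ⟨by omega⟩
  haveI : Fact (1 < q) := ⟨hq.one_lt⟩
  haveI : NeZero q := ⟨hq.pos.ne'⟩
  set w : Multiplicative (ZMod q) := ofAdd 1 with hw
  have hordw : orderOf w = q := by
    rw [hw, orderOf_ofAdd_eq_addOrderOf, ZMod.addOrderOf_one]
  have hn2' : ¬ 2 ∣ n := by
    have := Nat.odd_iff.mp hodd; omega
  refine ⟨{p | p.1 = sr 0 ∨ p = (r 1, 1) ∨ p = (r 1, w) ∨ p = (r 2, w)}, fun φ hφ => ?_,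
    ⟨⟨fun p => (p.1, p.2 * cfun p.1), fun p => (p.1, p.2 * (cfun p.1)⁻¹),
      fun p => by simp, fun p => by simp⟩, fun x y => ?_, ?_⟩⟩
  · -- stabilizer
    have hmem : ∀ z : DihedralGroup n × Multiplicative (ZMod q),
        (z.1 = sr 0 ∨ z = (r 1, 1) ∨ z = (r 1, w) ∨ z = (r 2, w)) →
        ((φ z).1 = sr 0 ∨ φ z = (r 1, 1) ∨ φ z = (r 1, w) ∨ φ z = (r 2, w)) := by
      intro z hz
      have h2 : z ∈ {p : DihedralGroup n × Multiplicative (ZMod q) |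
          p.1 = sr 0 ∨ p = (r 1, 1) ∨ p = (r 1, w) ∨ p = (r 2, w)} := hz
      have h3 := Set.mem_image_of_mem (⇑φ) h2
      rw [hφ] at h3
      exact h3
    have horder : ∀ z : DihedralGroup n × Multiplicative (ZMod q),
        orderOf (φ z) = orderOf z := fun z => by
      simpa using orderOf_injective φ.toMonoidHom φ.injective z
    have hcardq : Nat.card (Multiplicative (ZMod q)) = q := by
      rw [Nat.card_congr Multiplicative.toAdd, Nat.card_zmod]
    -- Claim A
    have hA : φ ((r 1 : DihedralGroup n), (1 : Multiplicative (ZMod q))) = (r 1, 1) := by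
      have h1 := hmem (r 1, 1) (Or.inr (Or.inl rfl))
      have hord1 : orderOf (φ ((r 1 : DihedralGroup n), (1 : Multiplicative (ZMod q)))) = n := by
        rw [horder, Prod.orderOf_mk, DihedralGroup.orderOf_r_one, orderOf_one,
          Nat.lcm_one_right]
      rcases h1 with h | h | h | h
      · exfalso
        apply hn2'
        rw [← hord1, Prod.orderOf, h, DihedralGroup.orderOf_sr]
        exact Nat.dvd_lcm_left _ _
      · exact h
      · exfalso
        apply hqn
        rw [← hord1, h, Prod.orderOf_mk, hordw]
        exact Nat.dvd_lcm_right _ _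
      · exfalso
        apply hqn
        rw [← hord1, h, Prod.orderOf_mk, hordw]
        exact Nat.dvd_lcm_right _ _
    -- Claim B
    have hB : φ ((1 : DihedralGroup n), w) = (1, w) := by
      have h1 := hmem (r 1, w) (Or.inr (Or.inr (Or.inl rfl)))
      have hord2 : orderOf (φ ((r 1 : DihedralGroup n), w)) = Nat.lcm n q := by
        rw [horder, Prod.orderOf_mk, DihedralGroup.orderOf_r_one, hordw]
      have e1 : ((1 : DihedralGroup n), w) =
          ((r 1 : DihedralGroup n), (1 : Multiplicative (ZMod q)))⁻¹ * (r 1, w) := by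
        simp
      rcases h1 with h | h | h | h
      · exfalso
        have h2 : 2 ∣ Nat.lcm n q := by
          rw [← hord2, Prod.orderOf, h, DihedralGroup.orderOf_sr]
          exact Nat.dvd_lcm_left _ _
        have h3 : 2 ∣ n * q := h2.trans (Nat.lcm_dvd_mul _ _)
        rcases (Nat.Prime.dvd_mul Nat.prime_two).mp h3 with h4 | h4
        · exact hn2' h4
        · exact hq2 ((Nat.prime_dvd_prime_iff_eq Nat.prime_two hq).mp h4).symm
      · exfalso
        apply hqn
        have h2 : orderOf (φ ((r 1 : DihedralGroup n), w)) = n := by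
          rw [h, Prod.orderOf_mk, DihedralGroup.orderOf_r_one, orderOf_one, Nat.lcm_one_right]
        rw [hord2] at h2
        exact h2 ▸ Nat.dvd_lcm_right n q
      · rw [e1, map_mul, map_inv, hA, h]
      · exfalso
        have hn21 : (-1 : ZMod n) + 2 = 1 := by ring
        have h2 : φ ((1 : DihedralGroup n), w) = ((r 1 : DihedralGroup n), w) := by
          rw [e1, map_mul, map_inv, hA, h]
          simp [hn21, DihedralGroup.one_def]
        have h3 : orderOf (φ ((1 : DihedralGroup n), w)) = q := by
          rw [horder, Prod.orderOf_mk, orderOf_one, hordw, Nat.lcm_one_left]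
        have h4 : orderOf (φ ((1 : DihedralGroup n), w)) = Nat.lcm n q := by
          rw [h2, Prod.orderOf_mk, DihedralGroup.orderOf_r_one, hordw]
        have h5 : n ∣ q := (h4.symm.trans h3) ▸ Nat.dvd_lcm_left n q
        rcases (Nat.dvd_prime hq).mp h5 with h6 | h6
        · omega
        · exact hqn (h6 ▸ dvd_rfl)
    -- Claim C
    have hC : φ ((sr 0 : DihedralGroup n), (1 : Multiplicative (ZMod q))) = (sr 0, 1) := by
      have h1 := hmem (sr 0, 1) (Or.inl rfl)
      have hord3 : orderOf (φ ((sr 0 : DihedralGroup n), (1 : Multiplicative (ZMod q)))) = 2 := by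
        rw [horder, Prod.orderOf_mk, DihedralGroup.orderOf_sr, orderOf_one, Nat.lcm_one_right]
      rcases h1 with h | h | h | h
      · have h2 : orderOf (φ ((sr 0 : DihedralGroup n), (1 : Multiplicative (ZMod q)))).2 ∣ 2 := by
          conv_rhs => rw [← hord3, Prod.orderOf]
          exact Nat.dvd_lcm_right _ _
        have h3 : orderOf (φ ((sr 0 : DihedralGroup n), (1 : Multiplicative (ZMod q)))).2 ∣ q := by
          have h3' := orderOf_dvd_natCard
            (φ ((sr 0 : DihedralGroup n), (1 : Multiplicative (ZMod q)))).2
          rwa [hcardq] at h3'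
        rcases (Nat.dvd_prime Nat.prime_two).mp h2 with h4 | h4
        · exact Prod.ext h (orderOf_eq_one_iff.mp h4)
        · exfalso
          exact hq2 ((Nat.prime_dvd_prime_iff_eq Nat.prime_two hq).mp (h4 ▸ h3)).symm
      · exfalso
        rw [h, Prod.orderOf_mk, DihedralGroup.orderOf_r_one, orderOf_one, Nat.lcm_one_right]
          at hord3
        omega
      · exfalso
        have h2 : q ∣ 2 := by
          rw [← hord3, h, Prod.orderOf_mk, hordw]
          exact Nat.dvd_lcm_right _ _
        exact hq2 ((Nat.prime_dvd_prime_iff_eq hq Nat.prime_two).mp h2)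
      · exfalso
        have h2 : q ∣ 2 := by
          rw [← hord3, h, Prod.orderOf_mk, hordw]
          exact Nat.dvd_lcm_right _ _
        exact hq2 ((Nat.prime_dvd_prime_iff_eq hq Nat.prime_two).mp h2)
    -- generation
    have hone : ∀ y : Multiplicative (ZMod q), φ ((1 : DihedralGroup n), y) = (1, y) := by
      intro y
      have hyexp : ((1 : DihedralGroup n), y) = ((1 : DihedralGroup n), w) ^ (toAdd y).val := by
        rw [Prod.pow_mk, one_pow]
        congr 1
        rw [hw, ← ofAdd_nsmul, Nat.smul_one_eq_cast, ZMod.natCast_val, ZMod.cast_id, ofAdd_toAdd]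
      rw [hyexp, map_pow, hB]
    have hr' : ∀ i : ZMod n, φ ((r i : DihedralGroup n), (1 : Multiplicative (ZMod q)))
        = (r i, 1) := by
      intro i
      have h1 : ((r i : DihedralGroup n), (1 : Multiplicative (ZMod q))) = (r 1, 1) ^ i.val := by
        rw [Prod.pow_mk, one_pow, DihedralGroup.r_one_pow, ZMod.natCast_val, ZMod.cast_id]
      rw [h1, map_pow, hA]
    apply MulEquiv.ext
    rintro ⟨g, y⟩
    rw [MulAut.one_apply]
    have hsplit : ((g : DihedralGroup n), y) = (g, 1) * ((1 : DihedralGroup n), y) := by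
      simp [Prod.mk_mul_mk]
    rw [hsplit, map_mul, hone]
    rcases g with i | i
    · rw [hr']
    · have h1 : ((sr i : DihedralGroup n), (1 : Multiplicative (ZMod q)))
          = (sr 0, 1) * (r i, 1) := by
        simp [Prod.mk_mul_mk]
      rw [h1, map_mul, hC, hr']
  · -- edge
    obtain ⟨g1, y1⟩ := x
    obtain ⟨g2, y2⟩ := y
    rcases g1 with i | i <;> rcases g2 with j | j <;>
      simp [Set.mem_setOf_eq, Prod.mk_mul_mk, Prod.inv_mk, Prod.ext_iff,
        mul_inv_rev, mul_assoc]
  · -- not a translation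
    rintro ⟨t, ht⟩
    have h0 := ht ((r 0 : DihedralGroup n), 1)
    have h1 := ht ((sr 0 : DihedralGroup n), 1)
    simp only [Equiv.coe_fn_mk, cfun_r, cfun_sr, mul_one, one_mul] at h0 h1
    have ht1 : t = 1 := left_eq_mul.mp h0
    rw [ht1, mul_one] at h1
    have h2 := (Prod.ext_iff.mp h1).2
    rw [← hw] at h2
    have h3 : (1 : ZMod q) = 0 := by
      have := congrArg toAdd h2
      simpa [hw] using this
    simp at h3


/-- a group of squarefree order that is abelian of composite order, or
isomorphic to `D_{2r} × C_q` with `r ∈ {3,5}` and `q` a prime not dividing `2r`,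
is not DRR-detecting. -/
theorem stmt17 {R : Type*} [Group R] [Finite R] (hsf : Squarefree (Nat.card R))
    (hcase :
      ((∀ a b : R, a * b = b * a) ∧ ¬ (Nat.card R).Prime ∧ 1 < Nat.card R) ∨
      (∃ n q : ℕ, (n = 3 ∨ n = 5) ∧ q.Prime ∧ ¬ q ∣ 2 * n ∧
        Nonempty (R ≃* DihedralGroup n × Multiplicative (ZMod q)))) :
    ∃ S : Set R,
      (∀ φ : MulAut R, φ '' S = S → φ = 1) ∧
      ∃ f : Equiv.Perm R,
        (∀ x y : R, x * y⁻¹ ∈ S ↔ f x * (f y)⁻¹ ∈ S) ∧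
        ¬ ∃ r : R, ∀ v, f v = v * r := by
  obtain ⟨hcomm, hnp, hlt⟩ | ⟨n, q, hn, hq, hqn, ⟨e⟩⟩ := hcase
  · letI : CommGroup R := { ‹Group R› with mul_comm := hcomm }
    have hN0 : Nat.card R ≠ 0 := by omega
    have hE0 : Monoid.exponent R ≠ 0 := Monoid.exponent_ne_zero_of_finite
    haveI : IsCyclic R := by
      apply IsCyclic.of_exponent_eq_card
      refine Nat.dvd_antisymm Group.exponent_dvd_nat_card ?_
      rw [← Nat.factorization_le_iff_dvd hN0 hE0, Finsupp.le_def]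
      intro p
      by_cases hp : p.Prime ∧ p ∣ Nat.card R
      · obtain ⟨hp1, hp2⟩ := hp
        haveI := Fact.mk hp1
        obtain ⟨g, hg⟩ := exists_prime_orderOf_dvd_card' p hp2
        have hpe : p ∣ Monoid.exponent R := hg ▸ Monoid.order_dvd_exponent g
        have h1 := (Nat.squarefree_iff_factorization_le_one hN0).mp hsf p
        have h2 := Nat.Prime.factorization_pos_of_dvd hp1 hE0 hpe
        omega
      · rcases not_and_or.mp hp with h | h
        · rw [Nat.factorization_eq_zero_of_not_prime _ h]
          exact Nat.zero_le _
        · rw [Nat.factorization_eq_zero_of_not_dvd h]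
          exact Nat.zero_le _
    have e1 : Multiplicative (ZMod (Nat.card R)) ≃* R := zmodCyclicMulEquiv inferInstance
    set N := Nat.card R with hNdef
    set qp := N.minFac with hqpdef
    have hqp : qp.Prime := Nat.minFac_prime (by omega)
    have hqd : qp ∣ N := Nat.minFac_dvd N
    set M := N / qp with hMdef
    have hNM : N = M * qp := (Nat.div_mul_cancel hqd).symm
    have hqM : ¬ qp ∣ M := by
      intro hd
      have h1 : qp * qp ∣ N := by
        rw [hNM]; exact mul_dvd_mul hd dvd_rfl
      exact hqp.ne_one (Nat.isUnit_iff.mp (hsf qp h1))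
    have hM0 : M ≠ 0 := by
      intro h
      rw [h, zero_mul] at hNM
      omega
    have hM1 : 1 < M := by
      rcases eq_or_lt_of_le (Nat.one_le_iff_ne_zero.mpr hM0) with h | h
      · exact absurd (show (Nat.card R).Prime by rw [← hNdef, hNM, ← h, one_mul]; exact hqp)
          hnp
      · exact h
    have hco : Nat.Coprime M qp := Nat.Coprime.symm ((Nat.Prime.coprime_iff_not_dvd hqp).mpr hqM)
    rw [hNM] at e1
    have e2 : Multiplicative (ZMod (M * qp)) ≃* Multiplicative (ZMod M × ZMod qp) :=
      AddEquiv.toMultiplicative (ZMod.chineseRemainder hco).toAddEquiv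
    exact (drr_ab M qp hM1 hqp hqM).transport (e1.symm.trans e2)
  · have h2 : ¬ q ∣ 2 := fun h => hqn (Dvd.dvd.mul_right h n)
    have hq2 : q ≠ 2 := fun h => h2 (h ▸ dvd_rfl)
    have hqn' : ¬ q ∣ n := fun h => hqn (Dvd.dvd.mul_left h 2)
    have hodd : Odd n := by rcases hn with rfl | rfl <;> decide
    have hgt : 2 < n := by rcases hn with rfl | rfl <;> norm_num
    exact (drr_dih n q hgt hodd hq hq2 hqn').transport e
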